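/- Let X₁,...,Xₙ be mutually independent Bernoulli random variables with P[Xᵢ = 1] = pᵢ, let X = ∑ᵢ Xᵢ and p = (1/n)∑ᵢ pᵢ. If p ∈ (0,1) and 0 < ε ≤ 3p/10, then P[X ≤ (p - ε)n] ≤ exp(-nε²/(2p(1-p)) + nε³/(2p²(1-p)²)). -/

import Mathlib

open MeasureTheory ProbabilityTheory Finset


private lemma aux_log1 (x : ℝ) (hx : 0 ≤ x) : x - x^2/2 ≤ Real.log (1+x) := by
  have key : ∀ y : ℝ, 0 ≤ y → HasDerivAt (fun z : ℝ => Real.log (1+z) - (z - z^2/2))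
      (1/(1+y) - (1 - y)) y := by
    intro y hy
    have h1 : HasDerivAt (fun z : ℝ => 1 + z) 1 y := (hasDerivAt_id y).const_add 1
    have h2 : HasDerivAt (fun z : ℝ => Real.log (1+z)) (1/(1+y)) y := h1.log (by linarith)
    have h3 : HasDerivAt (fun z : ℝ => z - z^2/2) (1 - y) y := by
      have := ((hasDerivAt_pow 2 y).div_const 2)
      have h4 := (hasDerivAt_id y).sub this
      exact h4.congr_deriv (by norm_num)
    exact h2.sub h3
  have hmono : MonotoneOn (fun z : ℝ => Real.log (1+z) - (z - z^2/2)) (Set.Ici 0) := by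
    apply monotoneOn_of_deriv_nonneg (convex_Ici 0)
    · intro y hy
      exact ((key y (Set.mem_Ici.1 hy)).continuousAt).continuousWithinAt
    · intro y hy
      rw [interior_Ici] at hy
      exact (key y (le_of_lt (Set.mem_Ioi.1 hy))).differentiableAt.differentiableWithinAt
    · intro y hy
      rw [interior_Ici] at hy
      have hy' : 0 < y := Set.mem_Ioi.1 hy
      rw [(key y hy'.le).deriv]
      have h1y : (0:ℝ) < 1 + y := by linarith
      rw [div_sub' (ne_of_gt h1y)]
      apply div_nonneg _ h1y.le
      nlinarith [sq_nonneg y]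
  have := hmono (Set.self_mem_Ici) (Set.mem_Ici.2 hx) hx
  simp at this
  linarith

private lemma aux_log2 (x : ℝ) (hx : 0 ≤ x) (hx1 : x < 1) : Real.log (1-x) ≤ -x - x^2/2 := by
  have key : ∀ y : ℝ, 0 ≤ y → y < 1 → HasDerivAt (fun z : ℝ => (-z - z^2/2) - Real.log (1-z))
      ((-1 - y) - (-1/(1-y))) y := by
    intro y hy hy1
    have h1 : HasDerivAt (fun z : ℝ => 1 - z) (-1) y := by
      simpa using ((hasDerivAt_id y).const_sub 1)
    have h2 : HasDerivAt (fun z : ℝ => Real.log (1-z)) (-1/(1-y)) y := h1.log (by linarith)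
    have h3 : HasDerivAt (fun z : ℝ => -z - z^2/2) (-1 - y) y := by
      have := ((hasDerivAt_pow 2 y).div_const 2)
      have h4 := ((hasDerivAt_id y).neg).sub this
      exact h4.congr_deriv (by norm_num)
    exact h3.sub h2
  have hmono : MonotoneOn (fun z : ℝ => (-z - z^2/2) - Real.log (1-z)) (Set.Ico 0 1) := by
    apply monotoneOn_of_deriv_nonneg (convex_Ico 0 1)
    · intro y hy
      obtain ⟨hy1, hy2⟩ := Set.mem_Ico.1 hy
      exact ((key y hy1 hy2).continuousAt).continuousWithinAt
    · intro y hy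
      rw [interior_Ico] at hy
      obtain ⟨hy1, hy2⟩ := Set.mem_Ioo.1 hy
      exact (key y hy1.le hy2).differentiableAt.differentiableWithinAt
    · intro y hy
      rw [interior_Ico] at hy
      obtain ⟨hy1, hy2⟩ := Set.mem_Ioo.1 hy
      rw [(key y hy1.le hy2).deriv]
      have h1y : (0:ℝ) < 1 - y := by linarith
      have : (-1 - y) - (-1/(1-y)) = y^2/(1-y) := by field_simp; ring
      rw [this]
      positivity
  have := hmono (Set.mem_Ico.2 ⟨le_refl 0, one_pos⟩) (Set.mem_Ico.2 ⟨hx, hx1⟩) hx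
  simp at this
  linarith

private lemma aux_L1 (x : ℝ) (hx : 0 ≤ x) : x + x^2/2 - x^3/6 ≤ (1+x)*Real.log (1+x) := by
  have key : ∀ y : ℝ, 0 ≤ y → HasDerivAt
      (fun z : ℝ => (1+z)*Real.log (1+z) - (z + z^2/2 - z^3/6))
      (Real.log (1+y) + 1 - (1 + y - y^2/2)) y := by
    intro y hy
    have h1 : HasDerivAt (fun z : ℝ => 1 + z) 1 y := (hasDerivAt_id y).const_add 1
    have h2 : HasDerivAt (fun z : ℝ => Real.log (1+z)) (1/(1+y)) y := h1.log (by linarith)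
    have h3 : HasDerivAt (fun z : ℝ => (1+z)*Real.log (1+z))
        (1 * Real.log (1+y) + (1+y) * (1/(1+y))) y := h1.mul h2
    have h4 : HasDerivAt (fun z : ℝ => z + z^2/2 - z^3/6) (1 + y - y^2/2) y := by
      have hA := ((hasDerivAt_pow 2 y).div_const 2)
      have hB := ((hasDerivAt_pow 3 y).div_const 6)
      have h5 := ((hasDerivAt_id y).add hA).sub hB
      refine h5.congr_deriv ?_
      norm_num
      ring
    have := h3.sub h4
    refine this.congr_deriv ?_
    have : (1:ℝ)+y ≠ 0 := by linarith
    field_simp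
  have hmono : MonotoneOn (fun z : ℝ => (1+z)*Real.log (1+z) - (z + z^2/2 - z^3/6))
      (Set.Ici 0) := by
    apply monotoneOn_of_deriv_nonneg (convex_Ici 0)
    · intro y hy
      exact ((key y (Set.mem_Ici.1 hy)).continuousAt).continuousWithinAt
    · intro y hy
      rw [interior_Ici] at hy
      exact (key y (le_of_lt (Set.mem_Ioi.1 hy))).differentiableAt.differentiableWithinAt
    · intro y hy
      rw [interior_Ici] at hy
      have hy' : 0 < y := Set.mem_Ioi.1 hy
      rw [(key y hy'.le).deriv]
      have := aux_log1 y hy'.le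
      linarith
  have := hmono (Set.self_mem_Ici) (Set.mem_Ici.2 hx) hx
  simp at this
  linarith

private lemma aux_L2 (x : ℝ) (hx : 0 ≤ x) (hx1 : x < 1) :
    -x + x^2/2 + x^3/6 ≤ (1-x)*Real.log (1-x) := by
  have key : ∀ y : ℝ, 0 ≤ y → y < 1 → HasDerivAt
      (fun z : ℝ => (1-z)*Real.log (1-z) - (-z + z^2/2 + z^3/6))
      ((-Real.log (1-y) - 1) - (-1 + y + y^2/2)) y := by
    intro y hy hy1
    have h1 : HasDerivAt (fun z : ℝ => 1 - z) (-1) y := by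
      simpa using ((hasDerivAt_id y).const_sub 1)
    have h2 : HasDerivAt (fun z : ℝ => Real.log (1-z)) (-1/(1-y)) y := h1.log (by linarith)
    have h3 : HasDerivAt (fun z : ℝ => (1-z)*Real.log (1-z))
        ((-1) * Real.log (1-y) + (1-y) * (-1/(1-y))) y := h1.mul h2
    have h4 : HasDerivAt (fun z : ℝ => -z + z^2/2 + z^3/6) (-1 + y + y^2/2) y := by
      have hA := ((hasDerivAt_pow 2 y).div_const 2)
      have hB := ((hasDerivAt_pow 3 y).div_const 6)
      have h5 := (((hasDerivAt_id y).neg).add hA).add hB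
      refine h5.congr_deriv ?_
      norm_num
      ring
    have := h3.sub h4
    refine this.congr_deriv ?_
    have : (1:ℝ)-y ≠ 0 := by linarith
    field_simp
    ring
  have hmono : MonotoneOn (fun z : ℝ => (1-z)*Real.log (1-z) - (-z + z^2/2 + z^3/6))
      (Set.Ico 0 1) := by
    apply monotoneOn_of_deriv_nonneg (convex_Ico 0 1)
    · intro y hy
      obtain ⟨hy1, hy2⟩ := Set.mem_Ico.1 hy
      exact ((key y hy1 hy2).continuousAt).continuousWithinAt
    · intro y hy
      rw [interior_Ico] at hy
      obtain ⟨hy1, hy2⟩ := Set.mem_Ioo.1 hy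
      exact (key y hy1.le hy2).differentiableAt.differentiableWithinAt
    · intro y hy
      rw [interior_Ico] at hy
      obtain ⟨hy1, hy2⟩ := Set.mem_Ioo.1 hy
      rw [(key y hy1.le hy2).deriv]
      have := aux_log2 y hy1.le hy2
      linarith
  have := hmono (Set.mem_Ico.2 ⟨le_refl 0, one_pos⟩) (Set.mem_Ico.2 ⟨hx, hx1⟩) hx
  simp at this
  linarith

private lemma kl_bound (p ε : ℝ) (hp0 : 0 < p) (hp1 : p < 1) (hε0 : 0 < ε)
    (hε1 : ε ≤ 3 * p / 10) :
    ε^2/(2*p*(1-p)) - ε^3/(2*p^2*(1-p)^2) ≤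
      (p-ε)*Real.log ((p-ε)/p) + (1-p+ε)*Real.log ((1-p+ε)/(1-p)) := by
  have hq0 : 0 < 1 - p := by linarith
  have hpε : 0 < p - ε := by linarith
  set a : ℝ := ε / p with ha
  set b : ℝ := ε / (1 - p) with hb
  have ha0 : 0 ≤ a := by positivity
  have ha1 : a < 1 := by rw [ha, div_lt_one hp0]; linarith
  have hb0 : 0 ≤ b := by positivity
  have h1 : (p-ε)/p = 1 - a := by rw [ha]; field_simp
  have h2 : (1-p+ε)/(1-p) = 1 + b := by rw [hb]; field_simp
  have hL2 := aux_L2 a ha0 ha1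
  have hL1 := aux_L1 b hb0
  have e1 : (p-ε)*Real.log ((p-ε)/p) = p * ((1-a)*Real.log (1-a)) := by
    rw [h1]; rw [ha]; field_simp
  have e2 : (1-p+ε)*Real.log ((1-p+ε)/(1-p)) = (1-p) * ((1+b)*Real.log (1+b)) := by
    rw [h2]; rw [hb]; field_simp
  rw [e1, e2]
  have key : ε^2/(2*p*(1-p)) - ε^3/(2*p^2*(1-p)^2) ≤
      p * (-a + a^2/2 + a^3/6) + (1-p) * (b + b^2/2 - b^3/6) := by
    have hdiff : p * (-a + a^2/2 + a^3/6) + (1-p) * (b + b^2/2 - b^3/6)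
        - (ε^2/(2*p*(1-p)) - ε^3/(2*p^2*(1-p)^2))
        = ε^3 * ((1-p)^2 - p^2 + 3) / (6*p^2*(1-p)^2) := by
      rw [ha, hb]; field_simp; ring
    nlinarith [mul_pos (mul_pos hε0 hε0) hε0, sq_nonneg (1-p), sq_nonneg p,
      div_nonneg (mul_nonneg (by positivity : (0:ℝ) ≤ ε^3)
        (by nlinarith : (0:ℝ) ≤ (1-p)^2 - p^2 + 3)) (by positivity : (0:ℝ) ≤ 6*p^2*(1-p)^2)]
  have m1 : p * (-a + a^2/2 + a^3/6) ≤ p * ((1-a)*Real.log (1-a)) :=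
    mul_le_mul_of_nonneg_left hL2 hp0.le
  have m2 : (1-p) * (b + b^2/2 - b^3/6) ≤ (1-p) * ((1+b)*Real.log (1+b)) :=
    mul_le_mul_of_nonneg_left hL1 hq0.le
  linarith

private lemma amgm {n : ℕ} (hn : 0 < n) (a : Fin n → ℝ) (ha : ∀ i, 0 ≤ a i) :
    ∏ i, a i ≤ ((∑ i, a i) / n) ^ n := by
  have hn' : (0:ℝ) < n := Nat.cast_pos.2 hn
  have h := Real.geom_mean_le_arith_mean_weighted Finset.univ (fun _ => 1/(n:ℝ)) a
    (fun i _ => by positivity) (by simp [Finset.card_univ]; field_simp) (fun i _ => ha i)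
  have h2 : (∏ i, a i ^ (1/(n:ℝ))) ^ (n:ℕ) ≤ (∑ i, (1/(n:ℝ)) * a i) ^ (n:ℕ) := by
    apply pow_le_pow_left₀ (Finset.prod_nonneg fun i _ => Real.rpow_nonneg (ha i) _) h
  have h3 : (∏ i, a i ^ (1/(n:ℝ))) ^ (n:ℕ) = ∏ i, a i := by
    rw [← Finset.prod_pow]
    apply Finset.prod_congr rfl
    intro i _
    rw [← Real.rpow_natCast (a i ^ (1/(n:ℝ))) n, ← Real.rpow_mul (ha i)]
    rw [one_div, inv_mul_cancel₀ (ne_of_gt hn'), Real.rpow_one]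
  have h4 : ∑ i, (1/(n:ℝ)) * a i = (∑ i, a i) / n := by
    rw [← Finset.mul_sum]; ring
  rw [h3, h4] at h2
  exact h2

theorem stmt_15 {Ω : Type*} [MeasurableSpace Ω] (μ : Measure Ω)
    [IsProbabilityMeasure μ] (n : ℕ) (hn : 0 < n) (X : Fin n → Ω → ℝ)
    (hmeas : ∀ i, Measurable (X i))
    (hind : iIndepFun X μ)
    (hval : ∀ i ω, X i ω = 0 ∨ X i ω = 1)
    (p : Fin n → ℝ) (hp : ∀ i, μ {ω | X i ω = 1} = ENNReal.ofReal (p i))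
    (pbar : ℝ) (hpbar : pbar = (∑ i, p i) / n)
    (hpbar0 : 0 < pbar) (hpbar1 : pbar < 1)
    (ε : ℝ) (hε0 : 0 < ε) (hε1 : ε ≤ 3 * pbar / 10) :
    (μ {ω | ∑ i, X i ω ≤ (pbar - ε) * n}).toReal ≤
      Real.exp (-(n * ε ^ 2) / (2 * pbar * (1 - pbar)) +
        n * ε ^ 3 / (2 * pbar ^ 2 * (1 - pbar) ^ 2)) := by
  have hn' : (0:ℝ) < n := Nat.cast_pos.2 hn
  have hq0 : 0 < 1 - pbar := by linarith
  have hpε : 0 < pbar - ε := by linarith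
  have hqε : 0 < 1 - pbar + ε := by linarith
  set t : ℝ := Real.log ((pbar - ε) * (1 - pbar) / (pbar * (1 - pbar + ε))) with ht
  have harg : 0 < (pbar - ε) * (1 - pbar) / (pbar * (1 - pbar + ε)) := by positivity
  have ht0 : t ≤ 0 := by
    apply Real.log_nonpos harg.le
    rw [div_le_one (by positivity)]
    nlinarith
  have hexp : Real.exp t = (pbar - ε) * (1 - pbar) / (pbar * (1 - pbar + ε)) :=
    Real.exp_log harg
  -- measurability and nonneg of X i
  have hX0 : ∀ i ω, 0 ≤ X i ω := by
    intro i ω; rcases hval i ω with h | h <;> simp [h]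
  have hX1 : ∀ i ω, X i ω ≤ 1 := by
    intro i ω; rcases hval i ω with h | h <;> simp [h]
  have hYmeas : Measurable (fun ω => ∑ i, X i ω) :=
    Finset.measurable_sum Finset.univ (fun i _ => hmeas i)
  have hint : Integrable (fun ω => Real.exp (t * ∑ i, X i ω)) μ := by
    constructor
    · exact ((hYmeas.const_mul t).exp).aestronglyMeasurable
    · apply MeasureTheory.HasFiniteIntegral.of_bounded (C := (1:ℝ))
      filter_upwards with ω
      rw [Real.norm_eq_abs, abs_of_pos (Real.exp_pos _), ← Real.exp_zero]
      apply Real.exp_le_exp.2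
      have : 0 ≤ ∑ i, X i ω := Finset.sum_nonneg fun i _ => hX0 i ω
      exact mul_nonpos_of_nonpos_of_nonneg ht0 this
  -- Chernoff
  have chern := measure_le_le_exp_mul_mgf (X := fun ω => ∑ i, X i ω) (μ := μ) (t := t)
    ((pbar - ε) * n) ht0 hint
  -- mgf of the sum
  have hsum_fn : (fun ω => ∑ i, X i ω) = ∑ i, X i := by
    ext ω; simp
  have hmgf_sum : mgf (fun ω => ∑ i, X i ω) μ t = ∏ i, mgf (X i) μ t := by
    rw [hsum_fn]; exact hind.mgf_sum hmeas Finset.univ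
  -- mgf of each coordinate
  set q : Fin n → ℝ := fun i => (μ {ω | X i ω = 1}).toReal with hqdef
  have hq01 : ∀ i, 0 ≤ q i ∧ q i ≤ 1 := by
    intro i
    refine ⟨ENNReal.toReal_nonneg, ?_⟩
    rw [hqdef]
    exact ENNReal.toReal_le_of_le_ofReal one_pos.le (by simpa using prob_le_one)
  have hqp : ∀ i, p i ≤ q i := by
    intro i
    rw [hqdef]
    simp only [hp i, ENNReal.toReal_ofReal_eq_iff]
    rcases le_or_gt 0 (p i) with h | h
    · rw [ENNReal.toReal_ofReal h]
    · rw [ENNReal.ofReal_of_nonpos h.le]; simpa using h.le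
  have hmgf_i : ∀ i, mgf (X i) μ t = 1 + (Real.exp t - 1) * q i := by
    intro i
    have hs : MeasurableSet {ω | X i ω = 1} := hmeas i (measurableSet_singleton 1)
    have hpt : (fun ω => Real.exp (t * X i ω)) =
        fun ω => 1 + (Real.exp t - 1) * ({ω | X i ω = 1}).indicator (fun _ => (1:ℝ)) ω := by
      ext ω
      rcases hval i ω with h | h
      · simp [Set.indicator_apply, Set.mem_setOf_eq, h]
      · simp [Set.indicator_apply, Set.mem_setOf_eq, h]
    rw [mgf]
    show ∫ ω, Real.exp (t * X i ω) ∂μ = _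
    rw [hpt]
    have hind_int : Integrable (({ω | X i ω = 1}).indicator (fun _ => (1:ℝ))) μ :=
      (integrable_const (1:ℝ)).indicator hs
    rw [integral_add (integrable_const 1) (hind_int.const_mul _), integral_const,
      integral_const_mul, integral_indicator_const _ hs]
    simp [hqdef, Measure.real]
  -- combine
  rw [hmgf_sum] at chern
  have hprod_eq : ∏ i, mgf (X i) μ t = ∏ i, (1 + (Real.exp t - 1) * q i) :=
    Finset.prod_congr rfl fun i _ => hmgf_i i
  rw [hprod_eq] at chern
  -- bound the product
  have hc0 : Real.exp t - 1 ≤ 0 := by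
    have := Real.exp_le_one_iff.2 ht0; linarith
  have hfac_pos : ∀ i, 0 < 1 + (Real.exp t - 1) * q i := by
    intro i
    have h1 : (Real.exp t - 1) * q i ≥ (Real.exp t - 1) * 1 :=
      mul_le_mul_of_nonpos_left (hq01 i).2 hc0
    have := Real.exp_pos t
    nlinarith
  have hprod_le : ∏ i, (1 + (Real.exp t - 1) * q i) ≤
      ((1 - pbar) / (1 - pbar + ε)) ^ n := by
    have h1 : ∏ i, (1 + (Real.exp t - 1) * q i) ≤
        ((∑ i, (1 + (Real.exp t - 1) * q i)) / n) ^ n :=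
      amgm hn _ (fun i => (hfac_pos i).le)
    have h2 : (∑ i, (1 + (Real.exp t - 1) * q i)) / n ≤ 1 + (Real.exp t - 1) * pbar := by
      rw [div_le_iff₀ hn']
      have hsq : (pbar * n) ≤ ∑ i, q i := by
        rw [hpbar] at *
        have : ∑ i, p i ≤ ∑ i, q i := Finset.sum_le_sum fun i _ => hqp i
        rw [div_mul_cancel₀]
        · linarith
        · exact ne_of_gt hn'
      have : (Real.exp t - 1) * ∑ i, q i ≤ (Real.exp t - 1) * (pbar * n) :=
        mul_le_mul_of_nonpos_left hsq hc0
      rw [Finset.sum_add_distrib, ← Finset.mul_sum]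
      simp only [Finset.sum_const, Finset.card_univ, Fintype.card_fin, nsmul_eq_mul, mul_one]
      nlinarith
    have h3 : 1 + (Real.exp t - 1) * pbar = (1 - pbar) / (1 - pbar + ε) := by
      rw [hexp]; field_simp; ring
    calc ∏ i, (1 + (Real.exp t - 1) * q i)
        ≤ ((∑ i, (1 + (Real.exp t - 1) * q i)) / n) ^ n := h1
      _ ≤ (1 + (Real.exp t - 1) * pbar) ^ n := by
          apply pow_le_pow_left₀ _ h2
          apply div_nonneg _ hn'.le
          exact Finset.sum_nonneg fun i _ => (hfac_pos i).le
      _ = ((1 - pbar) / (1 - pbar + ε)) ^ n := by rw [h3]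
  -- final computation
  have hchain : (μ {ω | ∑ i, X i ω ≤ (pbar - ε) * n}).toReal ≤
      Real.exp (-t * ((pbar - ε) * n)) * ((1 - pbar) / (1 - pbar + ε)) ^ n := by
    refine chern.trans ?_
    exact mul_le_mul_of_nonneg_left hprod_le (Real.exp_pos _).le
  refine hchain.trans ?_
  have hpow : ((1 - pbar) / (1 - pbar + ε)) ^ n =
      Real.exp ((n : ℝ) * Real.log ((1 - pbar) / (1 - pbar + ε))) := by
    rw [Real.exp_nat_mul, Real.exp_log (by positivity)]
  rw [hpow, ← Real.exp_add, Real.exp_le_exp]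
  -- per-unit inequality
  have hKL := kl_bound pbar ε hpbar0 hpbar1 hε0 hε1
  have hunit : -t * (pbar - ε) + Real.log ((1 - pbar) / (1 - pbar + ε)) =
      -((pbar - ε) * Real.log ((pbar - ε)/pbar) +
        (1 - pbar + ε) * Real.log ((1 - pbar + ε)/(1 - pbar))) := by
    rw [ht, Real.log_div (by positivity) (by positivity),
      Real.log_div (by positivity) (by positivity),
      Real.log_mul (by positivity) (by positivity),
      Real.log_mul (by positivity) (by positivity),
      Real.log_div (by positivity) (by positivity),
      Real.log_div (by positivity) (by positivity)]
    ring
  have hunit2 : -t * (pbar - ε) + Real.log ((1 - pbar) / (1 - pbar + ε)) ≤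
      -(ε^2/(2*pbar*(1-pbar)) - ε^3/(2*pbar^2*(1-pbar)^2)) := by
    rw [hunit]; linarith
  calc -t * ((pbar - ε) * n) + (n:ℝ) * Real.log ((1 - pbar) / (1 - pbar + ε))
      = (n:ℝ) * (-t * (pbar - ε) + Real.log ((1 - pbar) / (1 - pbar + ε))) := by ring
    _ ≤ (n:ℝ) * (-(ε^2/(2*pbar*(1-pbar)) - ε^3/(2*pbar^2*(1-pbar)^2))) :=
        mul_le_mul_of_nonneg_left hunit2 hn'.le
    _ = -(n * ε ^ 2) / (2 * pbar * (1 - pbar)) + n * ε ^ 3 / (2 * pbar ^ 2 * (1 - pbar) ^ 2) := by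
        ring
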